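/- Let s ≥ 0, b ≥ 1, b_0 ≥ 0 be integers and let (a_n)_{n≥0} be a sequence of rational numbers. Assume: (i) there exist a real number Δ > 1 and positive integers δ_n with δ_n ≤ Δ^{n+1} and δ_n·a_n ∈ ℤ for all n ≥ 0; and (ii) there exists p_0 such that for every prime p ≥ p_0 and every n ≥ 0 with a_n ≠ 0, one has v_p(a_n) ≥ −s·v_p(D_{bn+b_0}). Then there exists a positive integer C such that D_{bn+b_0}^s · C^{n+1} · a_n ∈ ℤ for all n ≥ 0. -/

import Mathlib

/-- `D n = lcm {1, 2, …, n}`, with `D 0 = 1`. -/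
def D (n : ℕ) : ℕ := (Finset.Icc 1 n).lcm id

lemma D_pos (n : ℕ) : 0 < D n := by
  rw [Nat.pos_iff_ne_zero, D, Ne, Finset.lcm_eq_zero_iff]
  rintro ⟨x, hx, h0⟩
  simp only [Finset.coe_Icc, Set.mem_Icc, Finset.mem_Icc] at hx
  simp only [id_eq] at h0
  omega

lemma den_dvd_int (q : ℚ) (N : ℕ) (hN : q.den ∣ N) : ∃ m : ℤ, (N : ℚ) * q = (m : ℚ) := by
  obtain ⟨t, rfl⟩ := hN
  refine ⟨t * q.num, ?_⟩
  push_cast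
  rw [mul_right_comm, mul_comm ((q.den : ℚ)) q, Rat.mul_den_eq_num]
  ring

/-- If a sequence of rationals `aₙ` has denominators bounded by `Δ^(n+1)` and satisfies
`v_p(aₙ) ≥ −s·v_p(D (b*n+b₀))` for all primes `p ≥ p₀`, then there exists a positive
integer `C` such that `D (b*n+b₀)^s · C^(n+1) · aₙ ∈ ℤ` for all `n`. -/
theorem denominators_from_large_primes (s b b₀ : ℕ) (hb : 1 ≤ b) (a : ℕ → ℚ)
    (Δ : ℝ) (hΔ : 1 < Δ) (δ : ℕ → ℕ) (hδpos : ∀ n, 0 < δ n)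
    (hδle : ∀ n, (δ n : ℝ) ≤ Δ ^ (n + 1))
    (hδint : ∀ n, ∃ m : ℤ, (δ n : ℚ) * a n = (m : ℚ))
    (p₀ : ℕ)
    (hval : ∀ p : ℕ, p.Prime → p₀ ≤ p → ∀ n : ℕ, a n ≠ 0 →
      -(s : ℤ) * padicValNat p (D (b * n + b₀)) ≤ padicValRat p (a n)) :
    ∃ C : ℕ, 0 < C ∧ ∀ n : ℕ, ∃ m : ℤ,
      (D (b * n + b₀) : ℚ) ^ s * (C : ℚ) ^ (n + 1) * a n = (m : ℚ) := by
  -- choose K with Δ ≤ 2^K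
  obtain ⟨K, hK⟩ := pow_unbounded_of_one_lt Δ (by norm_num : (1:ℝ) < 2)
  refine ⟨(p₀.factorial) ^ K, pow_pos p₀.factorial_pos K, fun n => ?_⟩
  set N := b * n + b₀ with hN
  set C := p₀.factorial ^ K with hC
  have hCpos : 0 < C := pow_pos p₀.factorial_pos K
  have hDpos : 0 < D N := D_pos N
  -- key divisibility
  have hdvd : (a n).den ∣ D N ^ s * C ^ (n + 1) := by
    by_cases ha : a n = 0
    · simp [ha]
    have hden0 : (a n).den ≠ 0 := (a n).den_nz
    have htgt0 : D N ^ s * C ^ (n + 1) ≠ 0 :=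
      Nat.mul_ne_zero (pow_ne_zero _ hDpos.ne') (pow_ne_zero _ hCpos.ne')
    rw [← Nat.factorization_le_iff_dvd hden0 htgt0]
    intro p
    by_cases hp : p.Prime
    swap
    · simp [Nat.factorization_eq_zero_of_not_prime _ hp]
    by_cases hpd : p ∣ (a n).den
    swap
    · simp [Nat.factorization_eq_zero_of_not_dvd hpd]
    have hfden : (a n).den.factorization p = padicValNat p (a n).den :=
      Nat.factorization_def _ hp
    have hmul : (D N ^ s * C ^ (n + 1)).factorization p
        = s * (D N).factorization p + (n + 1) * C.factorization p := by
      rw [Nat.factorization_mul (pow_ne_zero _ hDpos.ne') (pow_ne_zero _ hCpos.ne'),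
        Nat.factorization_pow, Nat.factorization_pow]
      simp
    rw [hmul]
    by_cases hpl : p₀ ≤ p
    · -- large prime: use hval
      have h := hval p hp hpl n ha
      have hpnum : ¬ ((p : ℤ) ∣ (a n).num) := by
        rw [Int.natCast_dvd]
        intro hdv
        exact hp.not_dvd_one ((a n).reduced ▸ Nat.dvd_gcd hdv hpd)
      have hnum : padicValInt p (a n).num = 0 := padicValInt.eq_zero_of_not_dvd hpnum
      rw [padicValRat_def, hnum, ← hN, neg_mul] at h
      have hD : (D N).factorization p = padicValNat p (D N) := Nat.factorization_def _ hp
      norm_num at h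
      have h1 : ((padicValNat p (a n).den : ℤ)) ≤ (s : ℤ) * (padicValNat p (D N) : ℤ) :=
        h
      have h2 : padicValNat p (a n).den ≤ s * padicValNat p (D N) := by exact_mod_cast h1
      rw [hfden, hD]
      exact le_trans h2 (Nat.le_add_right _ _)
    · -- small prime: p < p₀, use δ bound
      push_neg at hpl
      have hδ0 : (δ n : ℤ) ≠ 0 := by exact_mod_cast (hδpos n).ne'
      have hdvdδ : (a n).den ∣ δ n := by
        obtain ⟨m, hm⟩ := hδint n
        have han : a n = Rat.divInt m (δ n : ℤ) := by
          rw [Rat.divInt_eq_div, eq_div_iff (by exact_mod_cast (hδpos n).ne')]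
          push_cast
          linarith [hm]
        have := Rat.den_dvd m (δ n : ℤ)
        rw [← han] at this
        exact_mod_cast this
      have hvle : (a n).den.factorization p ≤ (δ n).factorization p :=
        (Nat.factorization_le_iff_dvd hden0 (hδpos n).ne').mpr hdvdδ p
      set v := (δ n).factorization p with hv
      have hpow : (p : ℝ) ^ v ≤ (δ n : ℝ) := by
        exact_mod_cast Nat.le_of_dvd (hδpos n) (Nat.ordProj_dvd (δ n) p)
      have h2p : (2 : ℝ) ^ v ≤ (p : ℝ) ^ v :=
        pow_le_pow_left₀ (by norm_num) (by exact_mod_cast hp.two_le) v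
      have hΔ2 : Δ ^ (n + 1) ≤ (2 : ℝ) ^ (K * (n + 1)) := by
        rw [pow_mul]
        exact pow_le_pow_left₀ (le_trans zero_le_one hΔ.le) hK.le (n + 1)
      have hvK : v ≤ K * (n + 1) := by
        have : (2 : ℝ) ^ v ≤ (2 : ℝ) ^ (K * (n + 1)) :=
          le_trans h2p (le_trans hpow (le_trans (hδle n) hΔ2))
        exact (pow_le_pow_iff_right₀ (by norm_num : (1:ℝ) < 2)).mp this
      have hCf : 1 ≤ p₀.factorial.factorization p := by
        have hpf : p ∣ p₀.factorial :=
          (Nat.Prime.dvd_factorial hp).mpr (le_of_lt hpl)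
        exact (Nat.Prime.factorization_pos_of_dvd hp p₀.factorial_ne_zero hpf)
      have hCfac : C.factorization p = K * p₀.factorial.factorization p := by
        rw [hC, Nat.factorization_pow]; simp
      calc (a n).den.factorization p ≤ v := hvle
        _ ≤ K * (n + 1) := hvK
        _ ≤ (n + 1) * C.factorization p := by
            rw [hCfac, ← mul_assoc, mul_comm (n+1) K]
            exact Nat.le_mul_of_pos_right _ hCf
        _ ≤ s * (D N).factorization p + (n + 1) * C.factorization p := Nat.le_add_left _ _
  obtain ⟨m, hm⟩ := den_dvd_int (a n) _ hdvd
  refine ⟨m, ?_⟩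
  rw [← hm]
  push_cast
  ring
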